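/- Let r ≥ -1 be real, b ≥ 1, ν ∈ ℕ, n ≥ 1, c₁,…,cₙ ∈ ℂ, σ₁,…,σₙ ∈ ℝ pairwise distinct. If the function f(y) = y^r (log y)^ν Σ_{j=1}^n c_j y^{i σ_j} is Lebesgue integrable on (b, ∞), then c_j = 0 for all j. -/

import Mathlib

open MeasureTheory Set intervalIntegral

/-- if `y^r (log y)^ν ∑ c_j y^{iσ_j}` is integrable on `(b,∞)` with pairwise
distinct `σ_j`, then all `c_j` vanish. -/
theorem stmt1 (n : ℕ) (hn : 1 ≤ n) (r : ℝ) (hr : -1 ≤ r) (b : ℝ) (hb : 1 ≤ b) (ν : ℕ)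
    (c : Fin n → ℂ) (σ : Fin n → ℝ) (hσ : Function.Injective σ)
    (hint : MeasureTheory.IntegrableOn
      (fun y : ℝ => ((y ^ r : ℝ) : ℂ) * (((Real.log y) ^ ν : ℝ) : ℂ) *
        ∑ j, c j * Complex.exp (Complex.I * (σ j : ℂ) * (Real.log y : ℂ)))
      (Set.Ioi b)) :
    ∀ j, c j = 0 := by
  set h : ℝ → ℂ := fun t => ∑ j, c j * Complex.exp (Complex.I * (σ j : ℂ) * (t : ℂ)) with hh
  have hcont : Continuous h := by
    apply continuous_finset_sum
    intro j _
    exact continuous_const.mul (Complex.continuous_exp.comp (by continuity))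
  set B : ℝ := max b (Real.exp 1) with hB
  have hB1 : Real.exp 1 ≤ B := le_max_right _ _
  have hBb : b ≤ B := le_max_left _ _
  have hBpos : (0 : ℝ) < B := lt_of_lt_of_le (Real.exp_pos 1) hB1
  set T : ℝ := Real.log B with hT
  have hexpT : Real.exp T = B := Real.exp_log hBpos
  have hT1 : 1 ≤ T := by
    have := Real.log_le_log (Real.exp_pos 1) hB1
    rwa [Real.log_exp] at this
  -- Step A : comparison
  have hintB := hint.mono_set (Ioi_subset_Ioi hBb)
  have hg : IntegrableOn (fun y => ‖h (Real.log y)‖ / y) (Ioi B) := by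
    apply Integrable.mono hintB
    · exact ((((hcont.measurable).comp Real.measurable_log).norm.div
        measurable_id).aestronglyMeasurable).restrict
    · filter_upwards [ae_restrict_mem measurableSet_Ioi] with y hy
      have hy1 : (1 : ℝ) < y := lt_of_le_of_lt (le_trans (Real.one_le_exp zero_le_one) hB1) hy
      have hy0 : (0 : ℝ) < y := lt_trans one_pos hy1
      have hlog1 : 1 ≤ Real.log y := by
        have := Real.log_le_log hBpos (le_of_lt hy)
        rw [hT] at hT1; linarith
      have hnormf : ‖((y ^ r : ℝ) : ℂ) * (((Real.log y) ^ ν : ℝ) : ℂ) * h (Real.log y)‖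
          = y ^ r * (Real.log y) ^ ν * ‖h (Real.log y)‖ := by
        rw [norm_mul, norm_mul, Complex.norm_real, Complex.norm_real,
          Real.norm_of_nonneg (Real.rpow_nonneg (le_of_lt hy0) r),
          Real.norm_of_nonneg (pow_nonneg (by linarith) ν)]
      rw [Real.norm_of_nonneg (div_nonneg (norm_nonneg _) (le_of_lt hy0))]
      show ‖h (Real.log y)‖ / y ≤ ‖_‖
      rw [hnormf]
      have h1 : (1 : ℝ) / y ≤ y ^ r := by
        have : y ^ (-1 : ℝ) ≤ y ^ r := Real.rpow_le_rpow_of_exponent_le (le_of_lt hy1) hr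
        rwa [Real.rpow_neg_one, inv_eq_one_div] at this
      have h2 : (1 : ℝ) ≤ (Real.log y) ^ ν := one_le_pow₀ hlog1
      calc ‖h (Real.log y)‖ / y = 1 / y * 1 * ‖h (Real.log y)‖ := by ring
        _ ≤ y ^ r * (Real.log y) ^ ν * ‖h (Real.log y)‖ := by
            apply mul_le_mul_of_nonneg_right _ (norm_nonneg _)
            exact mul_le_mul h1 h2 zero_le_one (Real.rpow_nonneg (le_of_lt hy0) r)
  -- Step B : substitution y = exp t
  have himg : Real.exp '' Ioi T = Ioi B := by
    ext y
    constructor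
    · rintro ⟨t, ht, rfl⟩
      exact hexpT ▸ Real.exp_lt_exp.mpr ht
    · intro hy
      exact ⟨Real.log y, by
        have := Real.log_lt_log hBpos hy
        exact this, Real.exp_log (lt_trans hBpos hy)⟩
  have key := integrableOn_image_iff_integrableOn_abs_deriv_smul
      (measurableSet_Ioi (a := T))
      (fun x _ => (Real.hasDerivAt_exp x).hasDerivWithinAt)
      (Real.exp_injective.injOn) (fun y => ‖h (Real.log y)‖ / y)
  rw [himg] at key
  have hnormh : IntegrableOn (fun t => ‖h t‖) (Ioi T) := by
    have h2 := key.mp hg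
    have heq : (fun x : ℝ => |Real.exp x| • (‖h (Real.log (Real.exp x))‖ / Real.exp x))
        = fun t => ‖h t‖ := by
      funext x
      rw [abs_of_pos (Real.exp_pos x), Real.log_exp, smul_eq_mul,
        mul_div_cancel₀ _ (ne_of_gt (Real.exp_pos x))]
    rwa [heq] at h2
  have hhint : IntegrableOn h (Ioi T) :=
    (integrable_norm_iff (hcont.aestronglyMeasurable.restrict)).mp hnormh
  -- Step C : main argument
  set M : ℝ := ∫ t in Ioi T, ‖h t‖ with hM
  intro k
  by_contra hck
  have hck' : 0 < ‖c k‖ := norm_pos_iff.mpr hck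
  set C : ℝ := ∑ j ∈ Finset.univ.erase k, ‖c j‖ * (2 / |σ j - σ k|) with hC
  have main : ∀ X, T ≤ X → ‖c k‖ * (X - T) ≤ M + C := by
    intro X hX
    -- rewrite the integral of h t * exp(-I σ_k t)
    have hptwise : ∀ t : ℝ, h t * Complex.exp (-(Complex.I * (σ k : ℂ) * (t : ℂ)))
        = ∑ j, c j * Complex.exp (Complex.I * ((σ j : ℂ) - (σ k : ℂ)) * (t : ℂ)) := by
      intro t
      rw [hh, Finset.sum_mul]
      apply Finset.sum_congr rfl
      intro j _
      rw [mul_assoc, ← Complex.exp_add]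
      ring_nf
    have hii : ∀ j : Fin n, IntervalIntegrable
        (fun t : ℝ => Complex.exp (Complex.I * ((σ j : ℂ) - (σ k : ℂ)) * (t : ℂ))) volume T X :=
      fun j => (Complex.continuous_exp.comp (by continuity)).intervalIntegrable T X
    have heq : (∫ t in T..X, h t * Complex.exp (-(Complex.I * (σ k : ℂ) * (t : ℂ))))
        = ∑ j, c j * ∫ t in T..X, Complex.exp (Complex.I * ((σ j : ℂ) - (σ k : ℂ)) * (t : ℂ)) := by
      simp_rw [hptwise]
      rw [intervalIntegral.integral_finset_sum]
      · exact Finset.sum_congr rfl fun j _ => intervalIntegral.integral_const_mul _ _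
      · intro j _
        exact (hii j).const_mul _
    -- value of the k-th integral
    have hEk : (∫ t in T..X, Complex.exp (Complex.I * ((σ k : ℂ) - (σ k : ℂ)) * (t : ℂ)))
        = ((X - T : ℝ) : ℂ) := by
      simp
    -- bound on j ≠ k terms
    have hEj : ∀ j ∈ Finset.univ.erase k,
        ‖c j * ∫ t in T..X, Complex.exp (Complex.I * ((σ j : ℂ) - (σ k : ℂ)) * (t : ℂ))‖
          ≤ ‖c j‖ * (2 / |σ j - σ k|) := by
      intro j hj
      have hjk : σ j ≠ σ k := fun hjk => (Finset.mem_erase.mp hj).1 (hσ hjk)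
      have hΔ : ((σ j : ℂ) - (σ k : ℂ)) ≠ 0 := by
        rw [← Complex.ofReal_sub]
        exact_mod_cast sub_ne_zero.mpr hjk
      have hc0 : Complex.I * ((σ j : ℂ) - (σ k : ℂ)) ≠ 0 := mul_ne_zero Complex.I_ne_zero hΔ
      have hval : (∫ t in T..X, Complex.exp (Complex.I * ((σ j : ℂ) - (σ k : ℂ)) * (t : ℂ)))
          = (Complex.exp (Complex.I * ((σ j : ℂ) - (σ k : ℂ)) * X)
            - Complex.exp (Complex.I * ((σ j : ℂ) - (σ k : ℂ)) * T))
            / (Complex.I * ((σ j : ℂ) - (σ k : ℂ))) :=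
        integral_exp_mul_complex hc0
      rw [norm_mul, hval]
      apply mul_le_mul_of_nonneg_left _ (norm_nonneg _)
      rw [norm_div]
      have hnormden : ‖Complex.I * ((σ j : ℂ) - (σ k : ℂ))‖ = |σ j - σ k| := by
        rw [norm_mul, Complex.norm_I, one_mul, ← Complex.ofReal_sub, Complex.norm_real,
          Real.norm_eq_abs]
      rw [hnormden]
      rw [div_le_div_iff_of_pos_right (abs_pos.mpr (sub_ne_zero.mpr hjk))]
      have hnorm1 : ∀ z : ℂ, z.re = 0 → ‖Complex.exp z‖ = 1 := fun z hz => by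
        rw [Complex.norm_exp, hz, Real.exp_zero]
      calc ‖Complex.exp (Complex.I * ((σ j : ℂ) - (σ k : ℂ)) * X)
            - Complex.exp (Complex.I * ((σ j : ℂ) - (σ k : ℂ)) * T)‖
          ≤ ‖Complex.exp (Complex.I * ((σ j : ℂ) - (σ k : ℂ)) * X)‖
            + ‖Complex.exp (Complex.I * ((σ j : ℂ) - (σ k : ℂ)) * T)‖ := norm_sub_le _ _
        _ ≤ 2 := by
            rw [hnorm1 _ (by simp), hnorm1 _ (by simp)]
            norm_num
    -- bound on the full integral
    have hnormexp : ∀ t : ℝ, ‖h t * Complex.exp (-(Complex.I * (σ k : ℂ) * (t : ℂ)))‖ = ‖h t‖ := by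
      intro t
      rw [norm_mul]
      simp [Complex.norm_exp]
    have hbound1 : ‖∫ t in T..X, h t * Complex.exp (-(Complex.I * (σ k : ℂ) * (t : ℂ)))‖ ≤ M := by
      calc ‖∫ t in T..X, h t * Complex.exp (-(Complex.I * (σ k : ℂ) * (t : ℂ)))‖
          ≤ ∫ t in T..X, ‖h t * Complex.exp (-(Complex.I * (σ k : ℂ) * (t : ℂ)))‖ :=
            intervalIntegral.norm_integral_le_integral_norm hX
        _ = ∫ t in T..X, ‖h t‖ := by simp_rw [hnormexp]
        _ = ∫ t in Ioc T X, ‖h t‖ := intervalIntegral.integral_of_le hX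
        _ ≤ M := by
            apply setIntegral_mono_set hnormh
            · filter_upwards with t using norm_nonneg _
            · exact HasSubset.Subset.eventuallyLE Ioc_subset_Ioi_self
    -- put it together
    have hsplit : c k * ((X - T : ℝ) : ℂ)
        = (∫ t in T..X, h t * Complex.exp (-(Complex.I * (σ k : ℂ) * (t : ℂ))))
          - ∑ j ∈ Finset.univ.erase k,
              c j * ∫ t in T..X, Complex.exp (Complex.I * ((σ j : ℂ) - (σ k : ℂ)) * (t : ℂ)) := by
      rw [heq, ← Finset.add_sum_erase _ _ (Finset.mem_univ k), hEk]
      ring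
    have hXT : (0 : ℝ) ≤ X - T := by linarith
    calc ‖c k‖ * (X - T) = ‖c k * ((X - T : ℝ) : ℂ)‖ := by
          rw [norm_mul, Complex.norm_real, Real.norm_of_nonneg hXT]
      _ ≤ ‖∫ t in T..X, h t * Complex.exp (-(Complex.I * (σ k : ℂ) * (t : ℂ)))‖
          + ‖∑ j ∈ Finset.univ.erase k,
              c j * ∫ t in T..X, Complex.exp (Complex.I * ((σ j : ℂ) - (σ k : ℂ)) * (t : ℂ))‖ := by
          rw [hsplit]; exact norm_sub_le _ _
      _ ≤ M + C := by
          apply add_le_add hbound1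
          calc ‖∑ j ∈ Finset.univ.erase k,
              c j * ∫ t in T..X, Complex.exp (Complex.I * ((σ j : ℂ) - (σ k : ℂ)) * (t : ℂ))‖
              ≤ ∑ j ∈ Finset.univ.erase k,
                ‖c j * ∫ t in T..X, Complex.exp (Complex.I * ((σ j : ℂ) - (σ k : ℂ)) * (t : ℂ))‖ :=
                norm_sum_le _ _
            _ ≤ C := Finset.sum_le_sum hEj
  -- conclude
  have h0 : (0 : ℝ) ≤ M + C := by
    have := main T le_rfl
    simpa using this
  have hfinal := main (T + (M + C + 1) / ‖c k‖) (by linarith [div_nonneg (by linarith : (0:ℝ) ≤ M + C + 1) hck'.le])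
  rw [add_sub_cancel_left, mul_div_cancel₀ _ (ne_of_gt hck')] at hfinal
  linarith
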